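/- If y is within distance c < d/2 of a root x_i of a monic polynomial P with roots x_1,...,x_m of multiplicities α_1,...,α_m (∑α_j = n), all other roots at distance ≥ d from x_i, and α_i(d − 2c) − c(n − α_i) > 0, then |α_i + (y − x_i)·∑_{j≠i} α_j/(y − x_j)| ≥ [α_i(d − 2c) − c(n − α_i)]/(d − 2c) > 0; in particular, P'(y)·(y − x_i) ≠ 0 whenever y ≠ x_i. -/

import Mathlib

open Finset

/-- Lower bound on `Pᵢ = α i + (y − x i)·∑_{j≠i} α j/(y − x j)`: if `|y − x i| ≤ c`,
`d − 2c > 0`, all other roots are at distance `≥ d` from `x i`, and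
`α i (d − 2c) − c(n − α i) > 0`, then
`|Pᵢ| ≥ (α i (d − 2c) − c(n − α i))/(d − 2c) > 0`; in particular
`P'(y)·(y − x i) ≠ 0` whenever `y ≠ x i`. -/
theorem chebyshev_denominator_bound (m n : ℕ) (x : Fin m → ℝ) (α : Fin m → ℕ)
    (i : Fin m) (y c d : ℝ)
    (hα : ∀ j, 0 < α j) (hn : (n : ℝ) = ∑ j : Fin m, (α j : ℝ))
    (hsep : ∀ j, j ≠ i → d ≤ |x i - x j|)
    (hy : |y - x i| ≤ c) (hd : 0 < d - 2 * c)
    (hden : 0 < (α i : ℝ) * (d - 2 * c) - c * ((n : ℝ) - (α i : ℝ)))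
    (P : ℝ → ℝ) (hP : P = fun t => ∏ j : Fin m, (t - x j) ^ (α j)) :
    (((α i : ℝ) * (d - 2 * c) - c * ((n : ℝ) - (α i : ℝ))) / (d - 2 * c) ≤
        |(α i : ℝ) + (y - x i) * ∑ j ∈ Finset.univ.erase i, (α j : ℝ) / (y - x j)| ∧
      0 < ((α i : ℝ) * (d - 2 * c) - c * ((n : ℝ) - (α i : ℝ))) / (d - 2 * c)) ∧
    (y ≠ x i → deriv P y * (y - x i) ≠ 0) := by
  have hc0 : 0 ≤ c := le_trans (abs_nonneg _) hy
  have hdc : 0 < d - c := by linarith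
  have hyj : ∀ j, j ≠ i → d - c ≤ |y - x j| := by
    intro j hj
    have h1 := hsep j hj
    have h2 : |x i - x j| ≤ |x i - y| + |y - x j| := abs_sub_le _ _ _
    have h3 : |x i - y| = |y - x i| := abs_sub_comm _ _
    linarith
  have hyj0 : ∀ j, j ≠ i → y - x j ≠ 0 := by
    intro j hj h
    have := hyj j hj
    rw [h, abs_zero] at this; linarith
  set S := ∑ j ∈ Finset.univ.erase i, (α j : ℝ) / (y - x j) with hS
  have hsum : ∑ j ∈ Finset.univ.erase i, (α j : ℝ) = (n : ℝ) - (α i : ℝ) := by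
    rw [hn, Finset.sum_erase_eq_sub (Finset.mem_univ i)]
  have hSabs : |S| ≤ ((n : ℝ) - (α i : ℝ)) / (d - 2 * c) := by
    calc |S| ≤ ∑ j ∈ Finset.univ.erase i, |(α j : ℝ) / (y - x j)| :=
          Finset.abs_sum_le_sum_abs _ _
      _ ≤ ∑ j ∈ Finset.univ.erase i, (α j : ℝ) / (d - 2 * c) := by
          apply Finset.sum_le_sum
          intro j hj
          have hj' : j ≠ i := (Finset.mem_erase.mp hj).1
          rw [abs_div, abs_of_nonneg (by positivity : (0:ℝ) ≤ (α j : ℝ))]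
          apply div_le_div_of_nonneg_left (by positivity) hd
          linarith [hyj j hj']
      _ = ((n : ℝ) - (α i : ℝ)) / (d - 2 * c) := by
          rw [← Finset.sum_div, hsum]
  have hnα : 0 ≤ (n : ℝ) - (α i : ℝ) := by
    rw [← hsum]; positivity
  have habs : |(y - x i) * S| ≤ c * ((n : ℝ) - (α i : ℝ)) / (d - 2 * c) := by
    rw [abs_mul, mul_div_assoc]
    exact mul_le_mul hy hSabs (abs_nonneg _) hc0
  have hlow : ((α i : ℝ) * (d - 2 * c) - c * ((n : ℝ) - (α i : ℝ))) / (d - 2 * c) ≤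
      |(α i : ℝ) + (y - x i) * S| := by
    have h1 : |(α i : ℝ)| ≤ |(α i : ℝ) + (y - x i) * S| + |(y - x i) * S| := by
      have := abs_add_le ((α i : ℝ) + (y - x i) * S) (-((y - x i) * S))
      simpa using this
    have h2 : |(α i : ℝ)| = (α i : ℝ) := abs_of_nonneg (by positivity)
    have h3 : ((α i : ℝ) * (d - 2 * c) - c * ((n : ℝ) - (α i : ℝ))) / (d - 2 * c) =
        (α i : ℝ) - c * ((n : ℝ) - (α i : ℝ)) / (d - 2 * c) := by
      field_simp
    linarith
  have hpos : 0 < ((α i : ℝ) * (d - 2 * c) - c * ((n : ℝ) - (α i : ℝ))) / (d - 2 * c) :=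
    div_pos hden hd
  refine ⟨⟨hlow, hpos⟩, ?_⟩
  intro hne
  have hy0 : ∀ j, y - x j ≠ 0 := by
    intro j
    by_cases h : j = i
    · subst h; exact sub_ne_zero.mpr hne
    · exact hyj0 j h
  have hder : ∀ j ∈ Finset.univ, HasDerivAt (fun t => (t - x j) ^ (α j))
      ((α j : ℝ) * (y - x j) ^ (α j - 1)) y := by
    intro j _
    have h1 : HasDerivAt (fun t => t - x j) 1 y := (hasDerivAt_id y).sub_const _
    simpa using h1.fun_pow (α j)
  have hD := HasDerivAt.fun_finsetProd hder
  have hderiv : deriv P y =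
      ∑ j : Fin m, (∏ k ∈ Finset.univ.erase j, (y - x k) ^ (α k)) •
        ((α j : ℝ) * (y - x j) ^ (α j - 1)) := by
    rw [hP]; exact hD.deriv
  have hterm : ∀ j ∈ (Finset.univ : Finset (Fin m)),
      (∏ k ∈ Finset.univ.erase j, (y - x k) ^ (α k)) •
        ((α j : ℝ) * (y - x j) ^ (α j - 1)) = P y * ((α j : ℝ) / (y - x j)) := by
    intro j _
    rw [smul_eq_mul, hP]
    have hpow : (y - x j) ^ (α j - 1) = (y - x j) ^ (α j) / (y - x j) := by
      rw [eq_div_iff (hy0 j), ← pow_succ, Nat.sub_add_cancel (hα j)]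
    rw [hpow]
    show (∏ k ∈ Finset.univ.erase j, (y - x k) ^ (α k)) *
        ((α j : ℝ) * ((y - x j) ^ (α j) / (y - x j))) =
      (∏ k : Fin m, (y - x k) ^ (α k)) * ((α j : ℝ) / (y - x j))
    rw [← Finset.prod_erase_mul Finset.univ _ (Finset.mem_univ j)]
    field_simp
  have hderiv2 : deriv P y = P y * ∑ j : Fin m, (α j : ℝ) / (y - x j) := by
    rw [hderiv, Finset.sum_congr rfl hterm, ← Finset.mul_sum]
  have hsplit : (∑ j : Fin m, (α j : ℝ) / (y - x j)) * (y - x i) =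
      (α i : ℝ) + (y - x i) * S := by
    rw [hS, Finset.mul_sum, ← Finset.sum_erase_add _ _ (Finset.mem_univ i), add_mul,
      div_mul_cancel₀ _ (hy0 i), Finset.sum_mul]
    have hcong : ∑ j ∈ Finset.univ.erase i, (α j : ℝ) / (y - x j) * (y - x i) =
        ∑ j ∈ Finset.univ.erase i, (y - x i) * ((α j : ℝ) / (y - x j)) :=
      Finset.sum_congr rfl fun j _ => by ring
    rw [hcong]; ring
  have hPy : P y ≠ 0 := by
    rw [hP]
    exact Finset.prod_ne_zero_iff.mpr fun j _ => pow_ne_zero _ (hy0 j)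
  have hQ : (α i : ℝ) + (y - x i) * S ≠ 0 := by
    intro h
    rw [h, abs_zero] at hlow
    linarith
  rw [hderiv2, mul_assoc, hsplit]
  exact mul_ne_zero hPy hQ
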